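/- Fix b > 0, a ∈ ℝ, p > 1, C > 0, and let ψ: ℝ → ℂ satisfy |ψ(t)| ≤ C(1 + t - a - (2b)^{-1})^{-p} for t > a + (2b)^{-1}, ψ(t) = 0 for t ∈ [a - (2b)^{-1}, a + (2b)^{-1}], and |ψ(t)| ≤ C(1 - t + a - (2b)^{-1})^{-p} for t < a - (2b)^{-1}. Then for every t ∈ [a - (2b)^{-1}, a + (2b)^{-1}], ∑_{l∈ℤ} |ψ(t - l b^{-1})| ≤ 2C(1 + (1 + b^{-1})^{-p}(b + p)(p-1)^{-1}). -/

import Mathlib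

lemma aux_tail_sum (b p : ℝ) (hb : 0 < b) (hp : 1 < p) (m : ℕ) :
    ∑ i ∈ Finset.range m, (1 + ((i:ℝ) + 2) * b⁻¹) ^ (-p) ≤
      b * ((1 + b⁻¹) * (1 + b⁻¹) ^ (-p)) / (p - 1) := by
  set c := b⁻¹ with hc
  have hc0 : 0 < c := by positivity
  set F : ℝ → ℝ := fun x => (1 + x * c) ^ (-p) with hF
  have hanti : AntitoneOn F (Set.Icc (1:ℝ) (1 + m)) := by
    intro x hx y hy hxy
    exact Real.rpow_le_rpow_of_nonpos (by nlinarith [hx.1]) (by nlinarith) (by linarith)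
  have key := hanti.sum_le_integral
  have heq : ∀ i ∈ Finset.range m, F (1 + ((i:ℕ) + 1 : ℕ)) = (1 + ((i:ℝ) + 2) * c) ^ (-p) := by
    intro i _
    simp only [hF]
    push_cast
    ring_nf
  rw [Finset.sum_congr rfl heq] at key
  have hint : (∫ x in (1:ℝ)..(1+(m:ℝ)), F x)
      = c⁻¹ * (((c * (1+(m:ℝ)) + 1) ^ (1-p) - (c * 1 + 1) ^ (1-p)) / (1-p)) := by
    have h1 : (∫ x in (1:ℝ)..(1+(m:ℝ)), F x)
        = ∫ x in (1:ℝ)..(1+(m:ℝ)), (fun u : ℝ => u ^ (-p)) (c * x + 1) := by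
      congr 1 with x
      simp only [hF]
      ring_nf
    rw [h1, intervalIntegral.integral_comp_mul_add (fun u : ℝ => u ^ (-p)) (ne_of_gt hc0) 1]
    rw [integral_rpow (Or.inr ⟨by linarith, Set.notMem_uIcc_of_lt (by nlinarith) (by nlinarith)⟩)]
    have : -p + 1 = 1 - p := by ring
    rw [this]
    simp [smul_eq_mul]
  have hbound : c⁻¹ * (((c * (1+(m:ℝ)) + 1) ^ (1-p) - (c * 1 + 1) ^ (1-p)) / (1-p))
      ≤ b * ((1 + c) * (1 + c) ^ (-p)) / (p - 1) := by
    have hB : (0:ℝ) ≤ (c * (1+(m:ℝ)) + 1) ^ (1-p) := Real.rpow_nonneg (by positivity) _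
    have hA : (c * 1 + 1) ^ (1-p) = (1 + c) * (1 + c) ^ (-p) := by
      have : c * 1 + 1 = 1 + c := by ring
      rw [this, sub_eq_add_neg, Real.rpow_add (by positivity), Real.rpow_one]
    rw [hA]
    have hcb : c⁻¹ = b := by rw [hc, inv_inv]
    rw [hcb]
    have e : ((c * (1 + (m:ℝ)) + 1) ^ (1 - p) - (1 + c) * (1 + c) ^ (-p)) / (1 - p)
        = ((1 + c) * (1 + c) ^ (-p) - (c * (1 + (m:ℝ)) + 1) ^ (1 - p)) / (p - 1) := by
      have h1 : (1:ℝ) - p ≠ 0 := by linarith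
      have h2 : p - 1 ≠ 0 := by linarith
      field_simp
      ring
    rw [e, mul_div_assoc]
    have h2 : (0:ℝ) ≤ (1 + c) * (1 + c) ^ (-p) := by positivity
    gcongr
    · linarith
  calc _ ≤ _ := key
    _ = _ := hint
    _ ≤ _ := hbound

lemma aux_range_sum (b p : ℝ) (hb : 0 < b) (hp : 1 < p) (N : ℕ) :
    ∑ k ∈ Finset.range N, (1 + (k : ℝ) * b⁻¹) ^ (-p) ≤
      1 + (1 + b⁻¹) ^ (-p) * (b + p) * (p - 1)⁻¹ := by
  set c := b⁻¹ with hc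
  have hc0 : 0 < c := by positivity
  have hp1 : (0:ℝ) < p - 1 := by linarith
  have hS0 : 0 ≤ (1 + c) ^ (-p) * (b + p) * (p - 1)⁻¹ := by positivity
  set f : ℕ → ℝ := fun k => (1 + (k : ℝ) * c) ^ (-p) with hf
  match N with
  | 0 => simpa using by linarith
  | 1 =>
    have : ∑ k ∈ Finset.range 1, f k = 1 := by simp [hf]
    rw [this]; linarith
  | (m+2) =>
    have e1 : ∑ k ∈ Finset.range (m+2), f k
        = (∑ i ∈ Finset.range m, f (i+2)) + f 1 + f 0 := by
      rw [Finset.sum_range_succ' f (m+1), Finset.sum_range_succ' (fun i => f (i+1)) m]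
    have hf0 : f 0 = 1 := by simp [hf]
    have hf1 : f 1 = (1 + c) ^ (-p) := by simp [hf]
    have e2 : ∀ i ∈ Finset.range m, f (i+2) = (1 + ((i:ℝ) + 2) * c) ^ (-p) := by
      intro i _; simp only [hf]; push_cast; ring_nf
    rw [e1, hf0, hf1, Finset.sum_congr rfl e2]
    have htail := aux_tail_sum b p hb hp m
    have hbc : b * c = 1 := by rw [hc]; field_simp
    set u := (1 + c) ^ (-p) with hu
    have hu0 : 0 ≤ u := Real.rpow_nonneg (by positivity) _
    have halg : u + b * ((1 + c) * u) / (p - 1) = u * (b + p) * (p - 1)⁻¹ := by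
      field_simp
      have hbc' : b * b⁻¹ = 1 := mul_inv_cancel₀ (ne_of_gt hb)
      linear_combination u * hbc'
    linarith [htail]

theorem periodized_tail_sum_bound (b a p C : ℝ) (hb : 0 < b) (hp : 1 < p) (hC : 0 < C)
    (ψ : ℝ → ℂ)
    (hright : ∀ t : ℝ, a + (2 * b)⁻¹ < t → ‖ψ t‖ ≤ C * (1 + t - a - (2 * b)⁻¹) ^ (-p))
    (hmid : ∀ t ∈ Set.Icc (a - (2 * b)⁻¹) (a + (2 * b)⁻¹), ψ t = 0)
    (hleft : ∀ t : ℝ, t < a - (2 * b)⁻¹ → ‖ψ t‖ ≤ C * (1 - t + a - (2 * b)⁻¹) ^ (-p)) :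
    ∀ t ∈ Set.Icc (a - (2 * b)⁻¹) (a + (2 * b)⁻¹),
      ∑' l : ℤ, ‖ψ (t - l * b⁻¹)‖ ≤
        2 * C * (1 + (1 + b⁻¹) ^ (-p) * (b + p) * (p - 1)⁻¹) := by
  intro t ht
  obtain ⟨ht1, ht2⟩ := ht
  have hb1 : (0:ℝ) < b⁻¹ := by positivity
  have hdc : (2*b)⁻¹ + (2*b)⁻¹ = b⁻¹ := by rw [mul_inv]; ring
  have hpt : ∀ l : ℤ, l ≠ 0 →
      ‖ψ (t - l * b⁻¹)‖ ≤ C * (1 + ((l.natAbs : ℝ) - 1) * b⁻¹) ^ (-p) := by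
    intro l hl
    have hna1 : 1 ≤ l.natAbs := Int.natAbs_pos.mpr hl
    have hna1' : (1:ℝ) ≤ (l.natAbs : ℝ) := by exact_mod_cast hna1
    have hbase : (0:ℝ) < 1 + ((l.natAbs : ℝ) - 1) * b⁻¹ := by nlinarith
    rcases lt_or_gt_of_ne hl with h | h
    · -- l < 0
      have hcast : ((l.natAbs : ℝ)) = -(l:ℝ) := by
        rw [Nat.cast_natAbs, abs_of_nonpos h.le]
        push_cast
        ring
      have hl1 : (l:ℝ) ≤ -1 := by exact_mod_cast (by omega : l ≤ -1)
      have hprod : (l:ℝ) * b⁻¹ ≤ -1 * b⁻¹ := mul_le_mul_of_nonneg_right hl1 hb1.le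
      have hx : a + (2*b)⁻¹ ≤ t - l * b⁻¹ := by nlinarith
      rcases eq_or_lt_of_le hx with heq | hlt
      · rw [hmid _ ⟨by nlinarith [hb1], heq.symm.le⟩, norm_zero]
        exact mul_nonneg hC.le (Real.rpow_nonneg hbase.le _)
      · refine (hright _ hlt).trans ?_
        refine mul_le_mul_of_nonneg_left ?_ hC.le
        refine Real.rpow_le_rpow_of_nonpos hbase ?_ (by linarith)
        rw [hcast]; nlinarith
    · -- 0 < l
      have hcast : ((l.natAbs : ℝ)) = (l:ℝ) := by
        rw [Nat.cast_natAbs, abs_of_nonneg h.le]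
      have hl1 : (1:ℝ) ≤ (l:ℝ) := by exact_mod_cast (by omega : (1:ℤ) ≤ l)
      have hprod : 1 * b⁻¹ ≤ (l:ℝ) * b⁻¹ := mul_le_mul_of_nonneg_right hl1 hb1.le
      have hx : t - l * b⁻¹ ≤ a - (2*b)⁻¹ := by nlinarith
      rcases eq_or_lt_of_le hx with heq | hlt
      · rw [hmid _ ⟨heq.ge, by nlinarith [hb1]⟩, norm_zero]
        exact mul_nonneg hC.le (Real.rpow_nonneg hbase.le _)
      · refine (hleft _ hlt).trans ?_
        refine mul_le_mul_of_nonneg_left ?_ hC.le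
        refine Real.rpow_le_rpow_of_nonpos hbase ?_ (by linarith)
        rw [hcast]; nlinarith
  have hrhs0 : (0:ℝ) ≤ 2 * C * (1 + (1 + b⁻¹) ^ (-p) * (b + p) * (p - 1)⁻¹) := by
    have : (0:ℝ) < p - 1 := by linarith
    positivity
  refine tsum_le_of_sum_le' hrhs0 ?_
  intro s
  classical
  set g : ℤ → ℝ := fun l =>
    if l = 0 then 0 else C * (1 + ((l.natAbs : ℝ) - 1) * b⁻¹) ^ (-p) with hg
  have hgnn : ∀ l : ℤ, 0 ≤ g l := by
    intro l
    by_cases h0 : l = 0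
    · simp [hg, h0]
    · have hna1' : (1:ℝ) ≤ (l.natAbs : ℝ) := by
        exact_mod_cast Int.natAbs_pos.mpr h0
      simp only [hg, if_neg h0]
      exact mul_nonneg hC.le (Real.rpow_nonneg (by nlinarith) _)
  have hbound : ∀ l ∈ s, ‖ψ (t - l * b⁻¹)‖ ≤ g l := by
    intro l _
    by_cases h0 : l = 0
    · subst h0
      simp [hg, hmid t ⟨ht1, ht2⟩]
    · simpa [hg, if_neg h0] using hpt l h0
  refine le_trans (Finset.sum_le_sum hbound) ?_
  set P := s.filter (fun l => 0 < l) with hP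
  set Q := s.filter (fun l => l < 0) with hQ
  have hsub : ∑ l ∈ s, g l = ∑ l ∈ P ∪ Q, g l := by
    refine (Finset.sum_subset ?_ ?_).symm
    · intro x hx
      rcases Finset.mem_union.mp hx with hx' | hx' <;>
        exact (Finset.mem_filter.mp hx').1
    · intro x hxs hxn
      have : x = 0 := by
        by_contra hne
        rcases lt_or_gt_of_ne hne with h | h
        · exact hxn (Finset.mem_union_right _ (Finset.mem_filter.mpr ⟨hxs, h⟩))
        · exact hxn (Finset.mem_union_left _ (Finset.mem_filter.mpr ⟨hxs, h⟩))
      simp [hg, this]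
  have hdisj : Disjoint P Q := by
    rw [Finset.disjoint_left]
    intro x hxP hxQ
    have h1 := (Finset.mem_filter.mp hxP).2
    have h2 := (Finset.mem_filter.mp hxQ).2
    omega
  rw [hsub, Finset.sum_union hdisj]
  set N := s.sup (fun l => l.natAbs) with hN
  set h : ℕ → ℝ := fun k => (1 + (k : ℝ) * b⁻¹) ^ (-p) with hh
  have hhnn : ∀ k : ℕ, 0 ≤ h k := fun k => Real.rpow_nonneg (by positivity) _
  have hkey : ∀ (T : Finset ℤ), T ⊆ s → (∀ x ∈ T, x ≠ 0) →
      (Set.InjOn (fun l : ℤ => l.natAbs - 1) T) →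
      ∑ l ∈ T, g l ≤ C * (1 + (1 + b⁻¹) ^ (-p) * (b + p) * (p - 1)⁻¹) := by
    intro T hTs hT0 hinj
    have e1 : ∀ l ∈ T, g l = C * h (l.natAbs - 1) := by
      intro l hl
      have h0 := hT0 l hl
      have hna1 : 1 ≤ l.natAbs := Int.natAbs_pos.mpr h0
      have : ((l.natAbs - 1 : ℕ) : ℝ) = (l.natAbs : ℝ) - 1 := by
        push_cast [hna1]; ring
      simp only [hg, if_neg h0, hh, this]
    rw [Finset.sum_congr rfl e1, ← Finset.mul_sum]
    have e2 : ∑ l ∈ T, h (l.natAbs - 1)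
        = ∑ k ∈ T.image (fun l : ℤ => l.natAbs - 1), h k := by
      rw [Finset.sum_image ?_]
      intro x hx y hy hxy
      exact hinj hx hy hxy
    rw [e2]
    have hsubN : T.image (fun l : ℤ => l.natAbs - 1) ⊆ Finset.range N := by
      intro k hk
      rcases Finset.mem_image.mp hk with ⟨l, hl, rfl⟩
      have hna1 : 1 ≤ l.natAbs := Int.natAbs_pos.mpr (hT0 l hl)
      have hle : l.natAbs ≤ N := Finset.le_sup (f := fun l : ℤ => l.natAbs) (hTs hl)
      exact Finset.mem_range.mpr (by omega)
    refine mul_le_mul_of_nonneg_left ?_ hC.le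
    refine le_trans (Finset.sum_le_sum_of_subset_of_nonneg hsubN (fun k _ _ => hhnn k)) ?_
    exact aux_range_sum b p hb hp N
  have hPbound := hkey P (Finset.filter_subset _ _)
    (fun x hx => by have := (Finset.mem_filter.mp hx).2; omega)
    (by
      intro x hx y hy hxy
      have hx' := (Finset.mem_filter.mp hx).2
      have hy' := (Finset.mem_filter.mp hy).2
      simp only at hxy
      omega)
  have hQbound := hkey Q (Finset.filter_subset _ _)
    (fun x hx => by have := (Finset.mem_filter.mp hx).2; omega)
    (by
      intro x hx y hy hxy
      have hx' := (Finset.mem_filter.mp hx).2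
      have hy' := (Finset.mem_filter.mp hy).2
      simp only at hxy
      omega)
  linarith
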